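/- Let W ∈ D_0(N,k) and let W = Σ_{a=1}^{k} W_a be its decomposition into the commuting factors g_a (block components along residue classes mod k). If W evolves by the quantized Euler equations Ẇ = [Δ_N^{-1}W, W]_N, then each factor satisfies Ẇ_a = [Δ_N^{-1}W, W_a]_N; consequently each W_a evolves isospectrally, so all eigenvalues of each W_a (equivalently, traces Tr(W_a^p) for all p) are conserved, giving N - 1 independent conserved Casimirs in total (after fixing total trace zero). -/

import Mathlib

open Matrix

attribute [local instance] Matrix.normedAddCommGroup Matrix.normedSpace
attribute [local instance] LieRing.ofAssociativeRing

lemma banded_mul {N k : ℕ} {A B : Matrix (Fin N) (Fin N) ℂ}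
    (hA : ∀ i j : Fin N, ¬ ((k : ℤ) ∣ ((i : ℤ) - (j : ℤ))) → A i j = 0)
    (hB : ∀ i j : Fin N, ¬ ((k : ℤ) ∣ ((i : ℤ) - (j : ℤ))) → B i j = 0) :
    ∀ i j : Fin N, ¬ ((k : ℤ) ∣ ((i : ℤ) - (j : ℤ))) → (A * B) i j = 0 := by
  intro i j h
  rw [Matrix.mul_apply]
  apply Finset.sum_eq_zero
  intro x _
  by_cases h1 : (k : ℤ) ∣ ((i : ℤ) - (x : ℤ))
  · by_cases h2 : (k : ℤ) ∣ ((x : ℤ) - (j : ℤ))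
    · exact absurd (by have := dvd_add h1 h2; simpa using this) h
    · rw [hB x j h2, mul_zero]
  · rw [hA i x h1, zero_mul]

/-- `D₀(N,k) = D(N,k) ∩ su(N)`: traceless skew-Hermitian matrices supported on
diagonals at multiples of `k`, as a real Lie subalgebra. -/
def D0Sub (N k : ℕ) : LieSubalgebra ℝ (Matrix (Fin N) (Fin N) ℂ) where
  carrier := {A | Aᴴ = -A ∧ A.trace = 0 ∧
      ∀ i j : Fin N, ¬ ((k : ℤ) ∣ ((i : ℤ) - (j : ℤ))) → A i j = 0}
  add_mem' := by
    intro A B hA hB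
    refine ⟨?_, ?_, ?_⟩
    · simp only [Matrix.conjTranspose_add, hA.1, hB.1]; abel
    · simp [Matrix.trace_add, hA.2.1, hB.2.1]
    · intro i j h
      simp [Matrix.add_apply, hA.2.2 i j h, hB.2.2 i j h]
  zero_mem' := ⟨by simp, by simp, fun i j _ => rfl⟩
  smul_mem' := by
    intro c A hA
    refine ⟨by simp [Matrix.conjTranspose_smul, hA.1], ?_, fun i j h => ?_⟩
    · rw [Matrix.trace_smul, hA.2.1, smul_zero]
    · simp [Matrix.smul_apply, hA.2.2 i j h]
  lie_mem' := by
    intro A B hA hB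
    refine ⟨?_, ?_, ?_⟩
    · simp only [Ring.lie_def, Matrix.conjTranspose_sub, Matrix.conjTranspose_mul, hA.1, hB.1]
      noncomm_ring
    · simp only [Ring.lie_def, Matrix.trace_sub, Matrix.trace_mul_comm A B, sub_self]
    · intro i j h
      simp only [Ring.lie_def, Matrix.sub_apply]
      rw [banded_mul hA.2.2 hB.2.2 i j h, banded_mul hB.2.2 hA.2.2 i j h, sub_zero]

/-- The projection `Π_a` of a matrix onto the block `g_a` supported on rows and columns
congruent to `a` mod `k` (rows/columns numbered `1, …, N`). -/
def projBlock (N k a : ℕ) (A : Matrix (Fin N) (Fin N) ℂ) : Matrix (Fin N) (Fin N) ℂ :=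
  Matrix.of fun i j =>
    if ((i : ℕ) + 1) % k = a % k ∧ ((j : ℕ) + 1) % k = a % k then A i j else 0


section Aux

attribute [-instance] instTopologicalSpaceMatrix

variable {N k : ℕ}

private lemma cond_trans {N k a : ℕ} {i x : Fin N}
    (hi : ((i : ℕ) + 1) % k = a % k) (hdvd : (k : ℤ) ∣ ((i : ℤ) - (x : ℤ))) :
    ((x : ℕ) + 1) % k = a % k := by
  have h : ((i : ℕ) + 1) ≡ ((x : ℕ) + 1) [MOD k] := by
    rw [Nat.modEq_iff_dvd]
    have e : (((x : ℕ) + 1 : ℕ) : ℤ) - (((i : ℕ) + 1 : ℕ) : ℤ) = -(((i : ℤ)) - (x : ℤ)) := by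
      push_cast; ring
    rw [e]
    exact dvd_neg.mpr hdvd
  exact h.symm.trans hi

private lemma dvd_of_conds {N k a : ℕ} {i x : Fin N}
    (hi : ((i : ℕ) + 1) % k = a % k) (hx : ((x : ℕ) + 1) % k = a % k) :
    (k : ℤ) ∣ ((i : ℤ) - (x : ℤ)) := by
  have h : ((x : ℕ) + 1) ≡ ((i : ℕ) + 1) [MOD k] := hx.trans hi.symm
  have := (Nat.modEq_iff_dvd).mp h
  have e : (((i : ℕ) + 1 : ℕ) : ℤ) - (((x : ℕ) + 1 : ℕ) : ℤ) = ((i : ℤ)) - (x : ℤ) := by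
    push_cast; ring
  rwa [e] at this

private lemma proj_mul_left (N k a : ℕ) {P X : Matrix (Fin N) (Fin N) ℂ}
    (hP : ∀ i j : Fin N, ¬ ((k : ℤ) ∣ ((i : ℤ) - (j : ℤ))) → P i j = 0) :
    projBlock N k a (P * X) = P * projBlock N k a X := by
  ext i j
  simp only [projBlock, Matrix.of_apply, Matrix.mul_apply]
  by_cases hj : ((j : ℕ) + 1) % k = a % k
  · by_cases hi : ((i : ℕ) + 1) % k = a % k
    · simp only [hi, hj, and_self, if_true]
      apply Finset.sum_congr rfl
      intro x _
      by_cases hx : ((x : ℕ) + 1) % k = a % k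
      · simp [hx, hj]
      · rw [hP i x (fun hd => hx (cond_trans hi hd)), if_neg (by simp [hx]), zero_mul, mul_zero]
    · rw [if_neg (by simp [hi])]
      symm
      apply Finset.sum_eq_zero
      intro x _
      by_cases hx : ((x : ℕ) + 1) % k = a % k
      · rw [hP i x (fun hd => hi (cond_trans hx (by
          have := dvd_neg.mpr hd
          simpa using this))), zero_mul]
      · rw [if_neg (by simp [hx]), mul_zero]
  · rw [if_neg (by simp [hj])]
    symm
    apply Finset.sum_eq_zero
    intro x _
    rw [if_neg (by simp [hj]), mul_zero]

private lemma proj_mul_right (N k a : ℕ) {P X : Matrix (Fin N) (Fin N) ℂ}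
    (hP : ∀ i j : Fin N, ¬ ((k : ℤ) ∣ ((i : ℤ) - (j : ℤ))) → P i j = 0) :
    projBlock N k a (X * P) = projBlock N k a X * P := by
  ext i j
  simp only [projBlock, Matrix.of_apply, Matrix.mul_apply]
  by_cases hi : ((i : ℕ) + 1) % k = a % k
  · by_cases hj : ((j : ℕ) + 1) % k = a % k
    · simp only [hi, hj, and_self, if_true]
      apply Finset.sum_congr rfl
      intro x _
      by_cases hx : ((x : ℕ) + 1) % k = a % k
      · simp [hi, hx]
      · rw [hP x j (fun hd => hx (cond_trans hj (by
          have := dvd_neg.mpr hd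
          simpa using this))), if_neg (by simp [hx]), zero_mul, mul_zero]
    · rw [if_neg (by simp [hj])]
      symm
      apply Finset.sum_eq_zero
      intro x _
      by_cases hx : ((x : ℕ) + 1) % k = a % k
      · rw [hP x j (fun hd => hj (cond_trans hx hd)), mul_zero]
      · rw [if_neg (by simp [hx]), zero_mul]
  · rw [if_neg (by simp [hi])]
    symm
    apply Finset.sum_eq_zero
    intro x _
    rw [if_neg (by simp [hi]), zero_mul]

/-- `projBlock` as an `ℝ`-linear map. -/
def projLM (N k a : ℕ) : Matrix (Fin N) (Fin N) ℂ →ₗ[ℝ] Matrix (Fin N) (Fin N) ℂ where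
  toFun := projBlock N k a
  map_add' A B := by
    ext i j
    simp only [projBlock, Matrix.of_apply, Matrix.add_apply]
    split <;> simp
  map_smul' c A := by
    ext i j
    simp only [projBlock, Matrix.of_apply, Matrix.smul_apply, RingHom.id_apply]
    split <;> simp

/-- Matrix multiplication as a continuous `ℝ`-bilinear map. -/
noncomputable def mulCLM (N : ℕ) :
    Matrix (Fin N) (Fin N) ℂ →L[ℝ] Matrix (Fin N) (Fin N) ℂ →L[ℝ] Matrix (Fin N) (Fin N) ℂ :=
  LinearMap.toContinuousLinearMap
  { toFun := fun A => LinearMap.toContinuousLinearMap (LinearMap.mulLeft ℝ A)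
    map_add' := fun A B => by
      ext C
      simp [add_mul]
    map_smul' := fun c A => by
      ext C
      simp [smul_mul_assoc] }

@[simp] lemma mulCLM_apply (N : ℕ) (A B : Matrix (Fin N) (Fin N) ℂ) :
    mulCLM N A B = A * B := rfl

private lemma HasDerivAt.matmul {N : ℕ} {A B : ℝ → Matrix (Fin N) (Fin N) ℂ}
    {A' B' : Matrix (Fin N) (Fin N) ℂ} {t : ℝ}
    (hA : HasDerivAt A A' t) (hB : HasDerivAt B B' t) :
    HasDerivAt (fun s => A s * B s) (A' * B t + A t * B') t := by
  letI i1 : NormedAddCommGroup (Matrix (Fin N) (Fin N) ℂ →L[ℝ] Matrix (Fin N) (Fin N) ℂ) :=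
    by with_unfolding_all exact ContinuousLinearMap.toNormedAddCommGroup
  letI i2 : NormedSpace ℝ (Matrix (Fin N) (Fin N) ℂ →L[ℝ] Matrix (Fin N) (Fin N) ℂ) :=
    by with_unfolding_all exact ContinuousLinearMap.toNormedSpace
  have h1 : HasDerivAt (fun s => mulCLM N (A s)) (mulCLM N A') t :=
    by
      have h := (mulCLM N).hasFDerivAt.comp_hasDerivAt (f := A) (f' := A') t (by with_unfolding_all exact hA)
      with_unfolding_all exact h
  have h2 := h1.clm_apply hB
  with_unfolding_all exact h2

private lemma pow_comm_deriv {N : ℕ} {A : ℝ → Matrix (Fin N) (Fin N) ℂ}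
    {Q : Matrix (Fin N) (Fin N) ℂ} {t : ℝ}
    (hA : HasDerivAt A (Q * A t - A t * Q) t) (p : ℕ) :
    HasDerivAt (fun s => A s ^ p) (Q * A t ^ p - A t ^ p * Q) t := by
  induction p with
  | zero =>
    simp only [pow_zero, mul_one, one_mul, sub_self]
    with_unfolding_all exact hasDerivAt_const t (1 : Matrix (Fin N) (Fin N) ℂ)
  | succ n ih =>
    simp only [pow_succ]
    convert ih.matmul hA using 1
    noncomm_ring

/-- Trace as a continuous `ℝ`-linear map. -/
noncomputable def traceCLM (N : ℕ) : Matrix (Fin N) (Fin N) ℂ →L[ℝ] ℂ :=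
  LinearMap.toContinuousLinearMap ((Matrix.traceLinearMap (Fin N) ℂ ℂ).restrictScalars ℝ)

@[simp] lemma traceCLM_apply (N : ℕ) (A : Matrix (Fin N) (Fin N) ℂ) :
    traceCLM N A = A.trace := rfl

end Aux

/-- Factor dynamics and its Casimirs (equations (13) of the paper). Let
`W : ℝ → D₀(N,k)` solve the quantized Euler equations `Ẇ = [Δ_N⁻¹W, W]_N` and let
`W_a = Π_a W` be its components along the commuting factors `g_a`. Then each factor
satisfies `Ẇ_a = [Δ_N⁻¹W, W_a]_N`; consequently each `W_a` evolves isospectrally, so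
all traces `Tr(W_a^p)` (equivalently, all eigenvalues of each `W_a`) are conserved,
giving the `N - 1` conserved Casimirs. -/
theorem factor_dynamics (N k : ℕ) (hN : 1 ≤ N) (hk : 1 ≤ k) (hkN : k ≤ N)
    (Δinv : Matrix (Fin N) (Fin N) ℂ →ₗ[ℝ] Matrix (Fin N) (Fin N) ℂ)
    (hΔ : ∀ A ∈ D0Sub N k, Δinv A ∈ D0Sub N k)
    (W : ℝ → Matrix (Fin N) (Fin N) ℂ)
    (hmem : ∀ t : ℝ, W t ∈ D0Sub N k)
    (hW : ∀ t : ℝ, HasDerivAt W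
      (((N : ℝ) ^ ((3 : ℝ) / 2)) • (Δinv (W t) * W t - W t * Δinv (W t))) t) :
    (∀ a : Fin k, ∀ t : ℝ, HasDerivAt (fun s : ℝ => projBlock N k ((a : ℕ) + 1) (W s))
      (((N : ℝ) ^ ((3 : ℝ) / 2)) •
        (Δinv (W t) * projBlock N k ((a : ℕ) + 1) (W t) -
          projBlock N k ((a : ℕ) + 1) (W t) * Δinv (W t))) t) ∧
    (∀ a : Fin k, ∀ p : ℕ, ∀ t : ℝ,
      ((projBlock N k ((a : ℕ) + 1) (W t)) ^ p).trace =
        ((projBlock N k ((a : ℕ) + 1) (W 0)) ^ p).trace) := by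
  have key1 : ∀ a : Fin k, ∀ t : ℝ, HasDerivAt (fun s : ℝ => projBlock N k ((a : ℕ) + 1) (W s))
      (((N : ℝ) ^ ((3 : ℝ) / 2)) •
        (Δinv (W t) * projBlock N k ((a : ℕ) + 1) (W t) -
          projBlock N k ((a : ℕ) + 1) (W t) * Δinv (W t))) t := by
    intro a t
    have hPband := (hΔ _ (hmem t)).2.2
    have h1 : HasDerivAt (fun s : ℝ => projLM N k ((a : ℕ) + 1) (W s))
        (projLM N k ((a : ℕ) + 1)
          (((N : ℝ) ^ ((3 : ℝ) / 2)) • (Δinv (W t) * W t - W t * Δinv (W t)))) t :=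
      (LinearMap.toContinuousLinearMap (projLM N k ((a : ℕ) + 1))).hasFDerivAt.comp_hasDerivAt
        t (hW t)
    have e : projLM N k ((a : ℕ) + 1)
        (((N : ℝ) ^ ((3 : ℝ) / 2)) • (Δinv (W t) * W t - W t * Δinv (W t)))
        = ((N : ℝ) ^ ((3 : ℝ) / 2)) •
          (Δinv (W t) * projBlock N k ((a : ℕ) + 1) (W t) -
            projBlock N k ((a : ℕ) + 1) (W t) * Δinv (W t)) := by
      rw [_root_.map_smul, map_sub]
      show ((N : ℝ) ^ ((3 : ℝ) / 2)) •
          (projBlock N k ((a : ℕ) + 1) (Δinv (W t) * W t)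
            - projBlock N k ((a : ℕ) + 1) (W t * Δinv (W t))) = _
      rw [proj_mul_left N k ((a : ℕ) + 1) hPband, proj_mul_right N k ((a : ℕ) + 1) hPband]
    rw [e] at h1
    exact h1
  refine ⟨key1, ?_⟩
  intro a p t
  set c : ℝ := (N : ℝ) ^ ((3 : ℝ) / 2) with hc
  set A : ℝ → Matrix (Fin N) (Fin N) ℂ := fun s => projBlock N k ((a : ℕ) + 1) (W s) with hA
  have hconst : ∀ s : ℝ, HasDerivAt (fun u : ℝ => ((A u) ^ p).trace) 0 s := by
    intro s
    have hder : HasDerivAt A ((c • Δinv (W s)) * A s - A s * (c • Δinv (W s))) s := by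
      have := key1 a s
      have e : c • (Δinv (W s) * A s - A s * Δinv (W s))
          = (c • Δinv (W s)) * A s - A s * (c • Δinv (W s)) := by
        rw [smul_sub, smul_mul_assoc, mul_smul_comm]
      rw [← e]
      exact this
    have hpow := pow_comm_deriv hder p
    have htr := (traceCLM N).hasFDerivAt.comp_hasDerivAt (f := fun s => A s ^ p) s (by with_unfolding_all exact hpow)
    have e0 : traceCLM N ((c • Δinv (W s)) * A s ^ p - A s ^ p * (c • Δinv (W s))) = 0 := by
      rw [traceCLM_apply, Matrix.trace_sub, Matrix.trace_mul_comm, sub_self]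
    have htr' := htr.congr_deriv e0
    simp only [Function.comp_def, traceCLM_apply] at htr'
    with_unfolding_all exact htr'
  have hdiff : Differentiable ℝ (fun u : ℝ => ((A u) ^ p).trace) :=
    fun s => (hconst s).differentiableAt
  have := is_const_of_deriv_eq_zero hdiff (fun s => (hconst s).deriv) t 0
  simpa using this
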